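/- Let H be a complex inner product space, A : H →L[ℂ] H a bounded self-adjoint operator, and φ ∈ H a unit vector that is not an eigenvector of A, i.e. A φ ≠ ⟨φ, A φ⟩ • φ. Then for every r ∈ ℝ there exists φ' ∈ H with ⟨φ', φ⟩ ≠ 0 such that (1/2) * (⟨φ', A φ⟩ / ⟨φ', φ⟩ + ⟨φ, A φ'⟩ / ⟨φ, φ'⟩) = (r : ℂ). In other words, the α = 0 two-state value, which equals the real part of the weak value ⟨φ', A φ⟩ / ⟨φ', φ⟩, attains every real number for a suitable choice of φ'. -/

import Mathlib

local notation "⟪" x ", " y "⟫" => @inner ℂ _ _ x y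

/-- The `α = 0` two-state value (the real part of the weak value) of a bounded
self-adjoint operator `A` for a pre-selected unit vector `φ` which is not an
eigenvector of `A` attains every real number for a suitable post-selection `φ'`. -/
theorem stmt_2 {H : Type*} [NormedAddCommGroup H] [InnerProductSpace ℂ H]
    (A : H →L[ℂ] H) (hA : ∀ ξ η : H, ⟪A ξ, η⟫ = ⟪ξ, A η⟫)
    (φ : H) (hφ : ‖φ‖ = 1) (hev : A φ ≠ ⟪φ, A φ⟫ • φ) :
    ∀ r : ℝ, ∃ φ' : H, ⟪φ', φ⟫ ≠ 0 ∧
      (1 / 2 : ℂ) * (⟪φ', A φ⟫ / ⟪φ', φ⟫ + ⟪φ, A φ'⟫ / ⟪φ, φ'⟫) = (r : ℂ) := by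
  intro r
  set a : ℂ := ⟪φ, A φ⟫ with ha
  have hφφ : ⟪φ, φ⟫ = 1 := by
    rw [inner_self_eq_norm_sq_to_K, hφ]; norm_num
  have hareal : (starRingEnd ℂ) a = a := by
    rw [ha, inner_conj_symm, hA]
  set ψ : H := A φ - a • φ with hψ
  have hψne : ψ ≠ 0 := sub_ne_zero.mpr hev
  have hψφ : ⟪ψ, φ⟫ = 0 := by
    rw [hψ, inner_sub_left, inner_smul_left, hφφ, hA, ← ha, hareal]
    ring
  have hψAφ : ⟪ψ, A φ⟫ = (‖ψ‖ : ℂ)^2 := by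
    have h : A φ = a • φ + ψ := by rw [hψ]; abel
    rw [h, inner_add_right, inner_smul_right, hψφ, inner_self_eq_norm_sq_to_K]
    norm_num
  have hn : (‖ψ‖ : ℝ) ≠ 0 := norm_ne_zero_iff.mpr hψne
  set t : ℝ := (r - a.re) / ‖ψ‖^2 with ht
  refine ⟨φ + (t : ℂ) • ψ, ?_, ?_⟩
  · rw [inner_add_left, inner_smul_left, hψφ, hφφ]
    simp
  · have h1 : ⟪φ + (t : ℂ) • ψ, φ⟫ = 1 := by
      rw [inner_add_left, inner_smul_left, hψφ, hφφ]; simp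
    have h2 : ⟪φ + (t : ℂ) • ψ, A φ⟫ = a + (t : ℂ) * (‖ψ‖ : ℂ)^2 := by
      rw [inner_add_left, inner_smul_left, hψAφ]
      simp [Complex.conj_ofReal]
      exact ha.symm
    have h3 : ⟪φ, A (φ + (t : ℂ) • ψ)⟫ = a + (t : ℂ) * (‖ψ‖ : ℂ)^2 := by
      rw [← hA, ← inner_conj_symm, h2, map_add, hareal, map_mul]
      simp [Complex.conj_ofReal]
    have h4 : ⟪φ, φ + (t : ℂ) • ψ⟫ = 1 := by
      rw [← inner_conj_symm, h1]; simp
    rw [h1, h2, h3, h4]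
    have haim : a = (a.re : ℂ) := (Complex.conj_eq_iff_re.mp hareal).symm
    have hnC : (‖ψ‖ : ℂ) ≠ 0 := by exact_mod_cast hn
    rw [haim, ht]
    push_cast
    field_simp
    ring
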